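/- Let L be an even lattice and H ∈ L primitive with H² = 8. Then the following are equivalent: (1) there exists h₁ ∈ L with h₁² = ±4, H·h₁ ≡ 0 mod 2, and H·S = ℤ where S is the primitive closure of ℤH + ℤh₁ in L; (2) there exists D ∈ L with (H + 2D)² = ±4. Moreover the correspondence is given by h₁ = H + 2D. -/

import Mathlib

/-- The primitive closure `(M ⊗ ℚ) ∩ L` of a sublattice `M` of a lattice `L`. -/
def primClosure {L : Type*} [AddCommGroup L] [Module ℤ L] (M : Submodule ℤ L) : Set L :=
  {x : L | ∃ n : ℤ, n ≠ 0 ∧ n • x ∈ M}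

section bridges
variable {L : Type*} [AddCommGroup L] [Module ℤ L]

lemma Bsmul₁ (B : L →ₗ[ℤ] L →ₗ[ℤ] ℤ) (c : ℤ) (x y : L) : B (c • x) y = c * B x y := by
  rw [← Int.cast_smul_eq_zsmul ℤ c x]
  simp only [Int.cast_id, map_smul, LinearMap.smul_apply, smul_eq_mul]

lemma Bsmul₂ (B : L →ₗ[ℤ] L →ₗ[ℤ] ℤ) (c : ℤ) (x y : L) : B x (c • y) = c * B x y := by
  rw [← Int.cast_smul_eq_zsmul ℤ c y]
  simp only [Int.cast_id, map_smul, smul_eq_mul]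

lemma smul_memZ (M : Submodule ℤ L) (c : ℤ) {x : L} (h : x ∈ M) : c • x ∈ M := by
  rw [← Int.cast_smul_eq_zsmul ℤ c x]
  exact M.smul_mem _ h

lemma mem_span_pairZ {a b x : L} (h : x ∈ Submodule.span ℤ ({a, b} : Set L)) :
    ∃ p q : ℤ, p • a + q • b = x := by
  obtain ⟨p, q, hpq⟩ := Submodule.mem_span_pair.mp h
  refine ⟨p, q, ?_⟩
  rw [← Int.cast_smul_eq_zsmul ℤ p a, ← Int.cast_smul_eq_zsmul ℤ q b]
  simpa using hpq

lemma cancel_two [Module.Free ℤ L] {a b : L} (h : a + a = b + b) : a = b := by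
  haveI := Module.Free.instIsTorsionFree (R := ℤ) (M := L)
  have h3 : (2 : ℤ) • a = (2 : ℤ) • b := by rw [two_zsmul, two_zsmul]; exact h
  rw [← Int.cast_smul_eq_zsmul ℤ 2 a, ← Int.cast_smul_eq_zsmul ℤ 2 b] at h3
  simp only [Int.cast_id] at h3
  exact smul_right_injective L (by norm_num) h3

/-- `primClosure` as a submodule. -/
def pcSub (M : Submodule ℤ L) : Submodule ℤ L where
  carrier := primClosure M
  zero_mem' := ⟨1, one_ne_zero, by simpa using M.zero_mem⟩
  add_mem' := by
    rintro x y ⟨n, hn, hnx⟩ ⟨k, hk, hky⟩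
    refine ⟨n * k, mul_ne_zero hn hk, ?_⟩
    have e : (n * k) • (x + y) = k • (n • x) + n • (k • y) := by
      rw [zsmul_add, mul_zsmul', mul_comm n k, mul_zsmul']
    rw [e]
    exact add_mem (smul_memZ M k hnx) (smul_memZ M n hky)
  smul_mem' := by
    rintro c x ⟨n, hn, hnx⟩
    refine ⟨n, hn, ?_⟩
    rw [← Int.cast_smul_eq_zsmul ℤ n]
    simp only [Int.cast_id]
    rw [@smul_smul _ _ _ Module.toDistribMulAction.toMulAction, mul_comm n c, ← @smul_smul _ _ _ Module.toDistribMulAction.toMulAction]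
    rw [← Int.cast_smul_eq_zsmul ℤ n x, Int.cast_id] at hnx
    exact M.smul_mem c hnx

lemma exists_one (B : L →ₗ[ℤ] L →ₗ[ℤ] ℤ) (H : L) (M : Submodule ℤ L)
    (hid : Ideal.span {z : ℤ | ∃ x ∈ primClosure M, z = B H x} = ⊤) :
    ∃ x ∈ primClosure M, B H x = 1 := by
  have hset : {z : ℤ | ∃ x ∈ primClosure M, z = B H x}
      = ((pcSub M).map (B H) : Set ℤ) := by
    ext z
    constructor
    · rintro ⟨x, h1, h2⟩; exact ⟨x, h1, h2.symm⟩
    · rintro ⟨x, h1, h2⟩; exact ⟨x, h1, h2.symm⟩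
  rw [hset] at hid
  have hmap : (pcSub M).map (B H) = ⊤ := by
    rw [← Submodule.span_eq ((pcSub M).map (B H))]
    exact hid
  have h1 : (1 : ℤ) ∈ (pcSub M).map (B H) := by rw [hmap]; trivial
  obtain ⟨x, hx, hBx⟩ := h1
  exact ⟨x, hx, hBx⟩

end bridges

section parts
variable {L : Type*} [AddCommGroup L] [Module ℤ L] [Module.Free ℤ L]

/-- Part (2) of the main lemma: `h₁ = H + 2D` satisfies all three conditions. -/
lemma mn_part2 (B : L →ₗ[ℤ] L →ₗ[ℤ] ℤ)
    (hsym : ∀ x y : L, B x y = B y x)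
    (heven : ∀ x : L, 2 ∣ B x x)
    (H : L) (hH : B H H = 8)
    (D : L) (hD : B (H + 2 • D) (H + 2 • D) = 4 ∨ B (H + 2 • D) (H + 2 • D) = -4) :
    2 ∣ B H (H + 2 • D) ∧
      Ideal.span {z : ℤ | ∃ x ∈ primClosure
          (Submodule.span ℤ ({H, H + 2 • D} : Set L)), z = B H x} = ⊤ := by
  obtain ⟨d', hd'⟩ := heven D
  have hBH : B H (H + 2 • D) = 8 + 2 * B H D := by
    rw [two_nsmul, map_add, map_add, hH]; ring
  have hval : B (H + 2 • D) (H + 2 • D) = 8 + 4 * B H D + 4 * B D D := by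
    rw [two_nsmul]
    simp only [map_add, LinearMap.add_apply]
    rw [hsym D H, hH]; ring
  constructor
  · exact ⟨4 + B H D, by omega⟩
  · -- t = B H D is odd
    have ht : B H D % 2 = 1 := by
      rcases hD with h | h <;> rw [hval, hd'] at h <;> omega
    obtain ⟨k, hk⟩ : ∃ k, B H D = 2 * k + 1 := ⟨(B H D - 1) / 2, by omega⟩
    obtain ⟨w₀, hw₀⟩ := Int.even_mul_succ_self k
    have h1eq : (1 : ℤ) = B H D * B H D - w₀ * 8 := by
      rw [hk]; linear_combination (-4 : ℤ) * hw₀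
    set M' := Submodule.span ℤ ({H, H + 2 • D} : Set L) with hM'
    have hmem8 : (8 : ℤ) ∈ {z : ℤ | ∃ x ∈ primClosure M', z = B H x} :=
      ⟨H, ⟨1, one_ne_zero, by
        rw [one_zsmul]; exact Submodule.subset_span (Set.mem_insert _ _)⟩, hH.symm⟩
    have hmemt : B H D ∈ {z : ℤ | ∃ x ∈ primClosure M', z = B H x} := by
      refine ⟨D, ⟨2, two_ne_zero, ?_⟩, rfl⟩
      have e : (2 : ℤ) • D = (H + 2 • D) - H := by rw [two_zsmul, two_nsmul]; abel
      rw [e]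
      exact sub_mem (Submodule.subset_span (by simp)) (Submodule.subset_span (by simp))
    rw [Ideal.eq_top_iff_one, h1eq]
    exact sub_mem (Ideal.mul_mem_left _ _ (Ideal.subset_span hmemt))
      (Ideal.mul_mem_left _ _ (Ideal.subset_span hmem8))

/-- Part (3) of the main lemma: any `h₁` satisfying the three conditions has the form
`H + 2D` with `D` in the primitive closure. -/
lemma mn_part3 (B : L →ₗ[ℤ] L →ₗ[ℤ] ℤ)
    (hsym : ∀ x y : L, B x y = B y x)
    (heven : ∀ x : L, 2 ∣ B x x)
    (H : L) (hH : B H H = 8)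
    (hprim : ∀ (n : ℤ) (x : L), H = n • x → IsUnit n)
    (h₁ : L) (hs : B h₁ h₁ = 4 ∨ B h₁ h₁ = -4) (hdvd : 2 ∣ B H h₁)
    (hid : Ideal.span {z : ℤ | ∃ x ∈ primClosure (Submodule.span ℤ ({H, h₁} : Set L)),
        z = B H x} = ⊤) :
    ∃ D ∈ primClosure (Submodule.span ℤ ({H, h₁} : Set L)), h₁ = H + 2 • D := by
  set M := Submodule.span ℤ ({H, h₁} : Set L) with hM
  obtain ⟨x, hxS, hx1⟩ := exists_one B H M hid
  obtain ⟨n₀, hn₀, hn₀M⟩ := hxS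
  obtain ⟨p₀, q₀, hpq₀⟩ := mem_span_pairZ hn₀M
  obtain ⟨m, hm⟩ := hdvd
  obtain ⟨d, hd⟩ := heven x
  obtain ⟨ε, hε, hs1⟩ : ∃ ε : ℤ, (ε = 1 ∨ ε = -1) ∧ B h₁ h₁ = 4 * ε := by
    rcases hs with h | h
    exacts [⟨1, Or.inl rfl, by omega⟩, ⟨-1, Or.inr rfl, by omega⟩]
  -- main induction on |n|
  have key : ∀ N : ℕ, ∀ n : ℤ, n.natAbs ≤ N → n ≠ 0 → ∀ p q : ℤ,
      p • H + q • h₁ = n • x → ∃ D ∈ primClosure M, h₁ = H + 2 • D := by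
    intro N
    induction N with
    | zero => intro n hle hn _ _ _; omega
    | succ N ih =>
      intro n hle hn p q hrel
      -- linear equation E1
      have h' := congrArg (B H) hrel
      simp only [map_add, Bsmul₂ B] at h'
      rw [hH, hm, hx1] at h'
      obtain ⟨w, hwdef⟩ : ∃ w : ℤ, w = 4 * p + m * q := ⟨_, rfl⟩
      have hw : n = 2 * w := by rw [hwdef]; linear_combination -h'
      by_cases hq : (2 : ℤ) ∣ q
      · obtain ⟨q₁, hq₁⟩ := hq
        by_cases hp : (2 : ℤ) ∣ p
        · -- p, q both even : recurse with n/2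
          obtain ⟨p₁, hp₁⟩ := hp
          have hw0 : w ≠ 0 := by omega
          have hle' : w.natAbs ≤ N := by omega
          refine ih w hle' hw0 p₁ q₁ (cancel_two ?_)
          calc (p₁ • H + q₁ • h₁) + (p₁ • H + q₁ • h₁)
              = (p₁ + p₁) • H + (q₁ + q₁) • h₁ := by simp only [add_zsmul]; try abel
            _ = p • H + q • h₁ := by
                rw [show p₁ + p₁ = p by omega, show q₁ + q₁ = q by omega]
            _ = n • x := hrel
            _ = w • x + w • x := by rw [show n = w + w by omega, add_zsmul]
        · -- q even, p odd : contradiction with primitivity of H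
          exfalso
          obtain ⟨k, hk⟩ : ∃ k, p = 2 * k + 1 := ⟨(p - 1) / 2, by omega⟩
          have hz' : (k • H + k • H + H) + (q₁ • h₁ + q₁ • h₁) = w • x + w • x := by
            calc (k • H + k • H + H) + (q₁ • h₁ + q₁ • h₁)
                = (k + k + 1) • H + (q₁ + q₁) • h₁ := by
                  simp only [add_zsmul, one_zsmul]; try abel
              _ = p • H + q • h₁ := by
                  rw [show k + k + 1 = p by omega, show q₁ + q₁ = q by omega]
              _ = n • x := hrel
              _ = w • x + w • x := by rw [show n = w + w by omega, add_zsmul]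
          have h9 : H - ((w • x - q₁ • h₁ - k • H) + (w • x - q₁ • h₁ - k • H))
              = ((k • H + k • H + H) + (q₁ • h₁ + q₁ • h₁)) - (w • x + w • x) := by
            abel
          rw [hz', sub_self] at h9
          have hz : H = (2 : ℤ) • (w • x - q₁ • h₁ - k • H) := by
            rw [two_zsmul]
            exact sub_eq_zero.mp h9
          have := hprim 2 _ hz
          rw [Int.isUnit_iff] at this
          omega
      · -- q odd : then p is odd too, and we can construct D
        have h2 : B (p • H + q • h₁) (p • H + q • h₁) = B (n • x) (n • x) := by
          rw [hrel]
        simp only [map_add, LinearMap.add_apply, Bsmul₁ B, Bsmul₂ B] at h2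
        rw [hsym h₁ H, hH, hm, hs1, hd] at h2
        have hE4 : 8 * p ^ 2 + 4 * (m * p * q) + 4 * ε * q ^ 2 = 2 * d * n ^ 2 := by
          linear_combination h2
        rw [hw] at hE4
        have h4 : 4 * (m * p * q + ε * q ^ 2)
            = 4 * (2 * (d * w ^ 2 - p ^ 2)) := by
          linear_combination hE4
        have hpar : m * p * q + ε * q ^ 2 = 2 * (d * w ^ 2 - p ^ 2) :=
          mul_left_cancel₀ (by norm_num) h4
        have hp : ¬ (2 : ℤ) ∣ p := by
          intro hp2
          have hd1 : (2 : ℤ) ∣ m * p * q + ε * q ^ 2 := ⟨_, hpar⟩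
          have hmpq : (2 : ℤ) ∣ m * p * q := ((hp2.mul_left m).mul_right q)
          have hd2 : (2 : ℤ) ∣ ε * q ^ 2 := (dvd_add_right hmpq).mp hd1
          have hd3 : (2 : ℤ) ∣ q ^ 2 := by
            rcases hε with rfl | rfl
            · simpa using hd2
            · rw [neg_mul, one_mul, dvd_neg] at hd2; exact hd2
          exact hq (Int.prime_two.dvd_of_dvd_pow hd3)
        obtain ⟨α, hα⟩ : ∃ α : ℤ, α + α = -1 - p := ⟨(-1 - p) / 2, by omega⟩
        obtain ⟨β, hβ⟩ : ∃ β : ℤ, β + β = 1 - q := ⟨(1 - q) / 2, by omega⟩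
        have key2 : (w + w) • x = p • H + q • h₁ := by
          rw [show w + w = n by omega]; exact hrel.symm
        have hDD : (α • H + β • h₁ + w • x) + (α • H + β • h₁ + w • x) = h₁ - H := by
          calc (α • H + β • h₁ + w • x) + (α • H + β • h₁ + w • x)
              = (α + α) • H + (β + β) • h₁ + (w + w) • x := by
                simp only [add_zsmul]; try abel
            _ = (α + α) • H + (β + β) • h₁ + (p • H + q • h₁) := by rw [key2]
            _ = ((-1 : ℤ) - p) • H + ((1 : ℤ) - q) • h₁ + (p • H + q • h₁) := by
                rw [hα, hβ]
            _ = h₁ - H := by simp only [sub_zsmul, one_zsmul, neg_zsmul]; try abel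
        refine ⟨α • H + β • h₁ + w • x, ⟨2, two_ne_zero, ?_⟩, ?_⟩
        · rw [two_zsmul, hDD]
          exact sub_mem (Submodule.subset_span (by simp)) (Submodule.subset_span (by simp))
        · rw [two_nsmul, hDD]; abel
  exact key n₀.natAbs n₀ le_rfl hn₀ p₀ q₀ hpq₀

end parts

/-- Main Lemma of Madonna–Nikulin III: for an even lattice `L` and primitive
`H ∈ L` with `H² = 8`, the existence of `h₁` with `h₁² = ±4`, `H·h₁ ≡ 0 mod 2` and
`H·S = ℤ` (`S` the primitive closure of `ℤH + ℤh₁`) is equivalent to the existence of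
`D ∈ L` with `(H + 2D)² = ±4`; the correspondence is `h₁ = H + 2D`. -/
theorem main_lemma_equivalence
    {L : Type*} [AddCommGroup L] [Module ℤ L] [Module.Free ℤ L] [Module.Finite ℤ L]
    (B : L →ₗ[ℤ] L →ₗ[ℤ] ℤ)
    (hsym : ∀ x y : L, B x y = B y x)
    (heven : ∀ x : L, 2 ∣ B x x)
    (H : L) (hH : B H H = 8)
    (hprim : ∀ (n : ℤ) (x : L), H = n • x → IsUnit n) :
    ((∃ h₁ : L, (B h₁ h₁ = 4 ∨ B h₁ h₁ = -4) ∧ 2 ∣ B H h₁ ∧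
        Ideal.span {z : ℤ | ∃ x ∈ primClosure (Submodule.span ℤ ({H, h₁} : Set L)),
          z = B H x} = ⊤) ↔
      (∃ D : L, B (H + 2 • D) (H + 2 • D) = 4 ∨ B (H + 2 • D) (H + 2 • D) = -4)) ∧
    (∀ D : L, (B (H + 2 • D) (H + 2 • D) = 4 ∨ B (H + 2 • D) (H + 2 • D) = -4) →
      (B (H + 2 • D) (H + 2 • D) = 4 ∨ B (H + 2 • D) (H + 2 • D) = -4) ∧
        2 ∣ B H (H + 2 • D) ∧
        Ideal.span {z : ℤ | ∃ x ∈ primClosure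
            (Submodule.span ℤ ({H, H + 2 • D} : Set L)), z = B H x} = ⊤) ∧
    (∀ h₁ : L, (B h₁ h₁ = 4 ∨ B h₁ h₁ = -4) → 2 ∣ B H h₁ →
      Ideal.span {z : ℤ | ∃ x ∈ primClosure (Submodule.span ℤ ({H, h₁} : Set L)),
        z = B H x} = ⊤ →
      ∃ D ∈ primClosure (Submodule.span ℤ ({H, h₁} : Set L)), h₁ = H + 2 • D) := by
  refine ⟨⟨?_, ?_⟩, ?_, ?_⟩
  · rintro ⟨h₁, hs, hdvd, hid⟩
    obtain ⟨D, -, hDeq⟩ := mn_part3 B hsym heven H hH hprim h₁ hs hdvd hid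
    exact ⟨D, by rw [← hDeq]; exact hs⟩
  · rintro ⟨D, hD⟩
    obtain ⟨h2, h3⟩ := mn_part2 B hsym heven H hH D hD
    exact ⟨H + 2 • D, hD, h2, h3⟩
  · intro D hD
    obtain ⟨h2, h3⟩ := mn_part2 B hsym heven H hH D hD
    exact ⟨hD, h2, h3⟩
  · intro h₁ hs hdvd hid
    exact mn_part3 B hsym heven H hH hprim h₁ hs hdvd hid
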